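/- Let n ≥ 1, I ⊂ ℝ a closed interval, x₁,…,xₙ ∈ I, and f ∈ C^{n-1}(I). For every 1 ≤ i ≤ n there exists ξ ∈ I such that f^{(i-1)}(ξ)/(i-1)! = Σ_{ℓ≤i} f(x_ℓ) · ∏_{m≤i, m≠ℓ} 1/(x_ℓ - x_m), provided the points x₁,…,x_i are pairwise distinct. -/

import Mathlib

open Set Finset Polynomial

private lemma contDiff_polyEval (p : ℝ[X]) (n : ℕ∞) : ContDiff ℝ n (fun x : ℝ => p.eval x) := by
  have h : (fun x : ℝ => p.eval x)
      = fun x : ℝ => ∑ k ∈ Finset.range (p.natDegree + 1), p.coeff k * x ^ k := by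
    funext x; exact eval_eq_sum_range x
  rw [h]
  exact ContDiff.sum fun k _ => (contDiff_const.mul (contDiff_id.pow k))

/-- Iterated derivative within `Icc a b` of a polynomial evaluation. -/
private lemma iteratedDerivWithin_polyEval (a b : ℝ) (hab : a < b) :
    ∀ (k : ℕ) (p : ℝ[X]) (y : ℝ), y ∈ Icc a b →
      iteratedDerivWithin k (fun t => p.eval t) (Icc a b) y
        = (Polynomial.derivative^[k] p).eval y := by
  intro k
  induction k with
  | zero => intro p y hy; simp
  | succ k IH =>
    intro p y hy
    have hu : UniqueDiffOn ℝ (Icc a b) := uniqueDiffOn_Icc hab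
    rw [iteratedDerivWithin_succ']
    have hcongr : Set.EqOn (derivWithin (fun t => p.eval t) (Icc a b))
        (fun t => p.derivative.eval t) (Icc a b) := by
      intro z hz
      exact ((p.hasDerivAt z).hasDerivWithinAt).derivWithin (hu.uniqueDiffWithinAt hz)
    calc iteratedDerivWithin k (derivWithin (fun t => p.eval t) (Icc a b)) (Icc a b) y
        = iteratedDerivWithin k (fun t => p.derivative.eval t) (Icc a b) y :=
          iteratedDerivWithin_congr hcongr hy
      _ = (Polynomial.derivative^[k] p.derivative).eval y := IH p.derivative y hy
      _ = (Polynomial.derivative^[k + 1] p).eval y := by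
          rw [Function.iterate_succ_apply]

/-- Repeated Rolle. -/
private lemma rolle_iter :
    ∀ (k : ℕ) (G : ℝ → ℝ) (a b : ℝ), a < b →
      ContDiffOn ℝ k G (Icc a b) →
      ∀ u : ℕ → ℝ, (∀ j, j ≤ k → u j ∈ Icc a b) → (∀ j, j < k → u j < u (j + 1)) →
        (∀ j, j ≤ k → G (u j) = 0) →
        ∃ ξ ∈ Icc a b, iteratedDerivWithin k G (Icc a b) ξ = 0 := by
  intro k
  induction k with
  | zero =>
    intro G a b hab _ u hmem _ hzero
    exact ⟨u 0, hmem 0 le_rfl, by simpa using hzero 0 le_rfl⟩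
  | succ k IH =>
    intro G a b hab hG u hmem hmono hzero
    have hu : UniqueDiffOn ℝ (Icc a b) := uniqueDiffOn_Icc hab
    have hcont : ContinuousOn G (Icc a b) := hG.continuousOn
    -- produce Rolle points
    have hroll : ∀ j, j ≤ k → ∃ v ∈ Ioo (u j) (u (j + 1)), deriv G v = 0 := by
      intro j hj
      have hlt : u j < u (j + 1) := hmono j (Nat.lt_succ_of_le hj)
      have hsub : Icc (u j) (u (j + 1)) ⊆ Icc a b := by
        apply Set.Icc_subset_Icc
        · exact (hmem j (hj.trans (Nat.le_succ k))).1
        · exact (hmem (j + 1) (Nat.succ_le_succ hj)).2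
      exact exists_deriv_eq_zero hlt (hcont.mono hsub)
        ((hzero j (hj.trans (Nat.le_succ k))).trans (hzero (j + 1) (Nat.succ_le_succ hj)).symm)
    choose v hv hdv using hroll
    -- make a total function
    set w : ℕ → ℝ := fun j => if h : j ≤ k then v j h else b with hw
    have hwIoo : ∀ j, j ≤ k → w j ∈ Ioo (u j) (u (j + 1)) := by
      intro j hj; simp only [hw, dif_pos hj]; exact hv j hj
    have hwmem : ∀ j, j ≤ k → w j ∈ Ioo a b := by
      intro j hj
      obtain ⟨h1, h2⟩ := hwIoo j hj
      constructor
      · exact lt_of_le_of_lt (hmem j (hj.trans (Nat.le_succ k))).1 h1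
      · exact lt_of_lt_of_le h2 (hmem (j + 1) (Nat.succ_le_succ hj)).2
    have hG' : ContDiffOn ℝ k (derivWithin G (Icc a b)) (Icc a b) := by
      apply hG.derivWithin hu
      norm_cast
    have hwzero : ∀ j, j ≤ k → derivWithin G (Icc a b) (w j) = 0 := by
      intro j hj
      have hnhds : Icc a b ∈ nhds (w j) := Icc_mem_nhds (hwmem j hj).1 (hwmem j hj).2
      rw [derivWithin_of_mem_nhds hnhds]
      simp only [hw, dif_pos hj]; exact hdv j hj
    have hwmono : ∀ j, j < k → w j < w (j + 1) := by
      intro j hj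
      have h1 : w j < u (j + 1) := (hwIoo j hj.le).2
      have h2 : u (j + 1) < w (j + 1) := (hwIoo (j + 1) hj).1
      exact h1.trans h2
    obtain ⟨ξ, hξ, hξ0⟩ := IH (derivWithin G (Icc a b)) a b hab hG' w
      (fun j hj => Ioo_subset_Icc_self (hwmem j hj)) hwmono hwzero
    refine ⟨ξ, hξ, ?_⟩
    rw [iteratedDerivWithin_succ']
    exact hξ0

private lemma basis_coeff {s : Finset ℕ} {x : ℕ → ℝ} (l : ℕ) :
    (Lagrange.basis s x l).coeff (s.erase l).card
      = ∏ m ∈ s.erase l, (x l - x m)⁻¹ := by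
  unfold Lagrange.basis Lagrange.basisDivisor
  rw [Finset.prod_mul_distrib, ← map_prod (Polynomial.C : ℝ →+* ℝ[X])]
  have hmonic : (∏ j ∈ s.erase l, (X - C (x j))).Monic :=
    monic_prod_of_monic _ _ fun j _ => monic_X_sub_C (x j)
  have hdeg : (∏ j ∈ s.erase l, (X - C (x j))).natDegree = (s.erase l).card := by
    rw [natDegree_prod_of_monic _ _ fun j _ => monic_X_sub_C (x j)]
    simp
  rw [Polynomial.coeff_C_mul, ← hdeg, hmonic.coeff_natDegree, mul_one]

theorem stmt_0 (n : ℕ) (hn : 1 ≤ n) (a b : ℝ) (hab : a < b)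
    (x : ℕ → ℝ) (hx : ∀ l < n, x l ∈ Icc a b)
    (f : ℝ → ℝ) (hf : ContDiffOn ℝ (n - 1 : ℕ) f (Icc a b))
    (i : ℕ) (hi1 : 1 ≤ i) (hin : i ≤ n)
    (hdist : ∀ l < i, ∀ m < i, l ≠ m → x l ≠ x m) :
    ∃ ξ ∈ Icc a b,
      iteratedDerivWithin (i - 1) f (Icc a b) ξ / (Nat.factorial (i - 1) : ℝ) =
        ∑ l ∈ Finset.range i, f (x l) * ∏ m ∈ (Finset.range i).erase l, (x l - x m)⁻¹ := by
  set N : ℕ := i - 1 with hN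
  have hiN : i = N + 1 := (Nat.succ_pred_eq_of_pos hi1).symm
  have hu : UniqueDiffOn ℝ (Icc a b) := uniqueDiffOn_Icc hab
  have hinj : Set.InjOn x (Finset.range i) := by
    intro l hl m hm hlm
    by_contra hne
    exact hdist l (by simpa using hl) m (by simpa using hm) hne hlm
  set p : ℝ[X] := Lagrange.interpolate (Finset.range i) x (fun l => f (x l)) with hp
  have hpdeg : p.natDegree ≤ N := by
    rcases eq_or_ne p 0 with h0 | h0
    · simp [h0]
    · have h2 : p.degree < (i : ℕ) := by
        simpa [hp] using Lagrange.degree_interpolate_lt (r := fun l => f (x l)) hinj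
      have h3 := (Polynomial.natDegree_lt_iff_degree_lt h0).mpr h2
      omega
  -- the coefficient of p at N
  have hcoeff : p.coeff N = ∑ l ∈ Finset.range i, f (x l) *
      ∏ m ∈ (Finset.range i).erase l, (x l - x m)⁻¹ := by
    rw [hp, Lagrange.interpolate_apply, Polynomial.finset_sum_coeff]
    refine Finset.sum_congr rfl fun l hl => ?_
    rw [Polynomial.coeff_C_mul]
    congr 1
    have hcard : ((Finset.range i).erase l).card = N := by
      rw [Finset.card_erase_of_mem hl, Finset.card_range]
    rw [← hcard]
    exact basis_coeff l
  -- g = f - p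
  set g : ℝ → ℝ := fun t => f t - p.eval t with hg
  have hpc : ∀ (m : ℕ∞), ContDiffOn ℝ m (fun t : ℝ => p.eval t) (Icc a b) :=
    fun m => (contDiff_polyEval p m).contDiffOn
  have hfN : ContDiffOn ℝ N f (Icc a b) := by
    apply hf.of_le
    exact_mod_cast (by omega : N ≤ n - 1)
  have hgc : ContDiffOn ℝ N g (Icc a b) := hfN.sub (hpc N)
  have hgzero : ∀ l, l < i → g (x l) = 0 := by
    intro l hl
    have := Lagrange.eval_interpolate_at_node (r := fun l => f (x l)) hinj
      (by simpa using hl : l ∈ Finset.range i)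
    show f (x l) - Polynomial.eval (x l) p = 0
    rw [this]; ring
  -- sorted enumeration of the nodes
  have hcards : ((Finset.range i).image x).card = i := by
    rw [Finset.card_image_of_injOn hinj, Finset.card_range]
  set e := Finset.orderIsoOfFin ((Finset.range i).image x) hcards with he
  set u : ℕ → ℝ := fun j => if h : j < i then (e ⟨j, h⟩ : ℝ) else b with huu
  have humem : ∀ j, j ≤ N → u j ∈ Icc a b := by
    intro j hj
    have hji : j < i := by omega
    simp only [huu, dif_pos hji]
    have : (e ⟨j, hji⟩ : ℝ) ∈ (Finset.range i).image x := (e ⟨j, hji⟩).2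
    obtain ⟨l, hl, hxl⟩ := Finset.mem_image.mp this
    rw [← hxl]
    exact hx l (lt_of_lt_of_le (by simpa using hl) hin)
  have humono : ∀ j, j < N → u j < u (j + 1) := by
    intro j hj
    have h1 : j < i := by omega
    have h2 : j + 1 < i := by omega
    simp only [huu, dif_pos h1, dif_pos h2]
    exact_mod_cast e.strictMono (by simp [Fin.lt_def])
  have huzero : ∀ j, j ≤ N → g (u j) = 0 := by
    intro j hj
    have hji : j < i := by omega
    simp only [huu, dif_pos hji]
    have : (e ⟨j, hji⟩ : ℝ) ∈ (Finset.range i).image x := (e ⟨j, hji⟩).2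
    obtain ⟨l, hl, hxl⟩ := Finset.mem_image.mp this
    rw [← hxl]
    exact hgzero l (by simpa using hl)
  obtain ⟨ξ, hξ, hξ0⟩ := rolle_iter N g a b hab hgc u humem humono huzero
  refine ⟨ξ, hξ, ?_⟩
  -- compute iterated derivative of g
  have hsplit : iteratedDerivWithin N g (Icc a b) ξ
      = iteratedDerivWithin N f (Icc a b) ξ
        - iteratedDerivWithin N (fun t => p.eval t) (Icc a b) ξ := by
    have := iteratedDerivWithin_sub hξ hu (hfN ξ hξ) (hpc N ξ hξ)
    exact this
  have hpoly : iteratedDerivWithin N (fun t => p.eval t) (Icc a b) ξ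
      = (N.factorial : ℝ) * p.coeff N := by
    rw [iteratedDerivWithin_polyEval a b hab N p ξ hξ]
    have hd0 : (Polynomial.derivative^[N] p).natDegree = 0 := by
      have := Polynomial.natDegree_iterate_derivative p N
      omega
    rw [Polynomial.eval_eq_sum_range, hd0, zero_add, Finset.sum_range_one,
      Polynomial.coeff_iterate_derivative]
    simp [Nat.descFactorial_self, mul_comm]
  have hfac : (N.factorial : ℝ) ≠ 0 := by
    exact_mod_cast N.factorial_ne_zero
  have : iteratedDerivWithin N f (Icc a b) ξ = (N.factorial : ℝ) * p.coeff N := by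
    have := hsplit
    rw [hξ0, hpoly] at this
    linarith
  rw [this, hcoeff]
  field_simp
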